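/- Let ξ, v be nonzero vectors in ℂⁿ and ℂ^d respectively, and let f : ℂ → ℂ be holomorphic on an open set U ⊂ ℂ. Define u(x) = f(x·ξ) v for x ∈ ℝⁿ with x·ξ ∈ U, where x·ξ = Σ x_i ξ_i. Then for each l, the l-th total derivative satisfies D^l u(x) = f^{(l)}(x·ξ) · v ⊗ ξ^{⊗l}. Consequently, if B is a k-th order homogeneous operator with symbol B(·) and B(ξ)v = 0, then Bu = 0 on {x : x·ξ ∈ U}. -/

import Mathlib

/-- For nonzero `ξ ∈ ℂⁿ`, `v ∈ ℂ^d`, and `f` holomorphic on an open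
`U ⊂ ℂ`, the map `u(x) = f(x·ξ)v` satisfies
`D^l u(x)[w₁,…,w_l] = f^{(l)}(x·ξ) (∏ⱼ wⱼ·ξ) v` wherever `x·ξ ∈ U`. Consequently, if
`B` is a `k`-th order homogeneous operator whose (complexified) symbol kills `v` at `ξ`,
then `Bu = 0` on `{x : x·ξ ∈ U}`. -/
theorem stmt16 (n d k : ℕ) (W : Type*) [AddCommGroup W] [Module ℂ W]
    (ξ : Fin n → ℂ) (hξ : ξ ≠ 0) (v : Fin d → ℂ) (hv : v ≠ 0)
    (U : Set ℂ) (hU : IsOpen U) (f : ℂ → ℂ) (hf : DifferentiableOn ℂ f U)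
    (u : (Fin n → ℝ) → (Fin d → ℂ))
    (hu : u = fun x => f (∑ i, (x i : ℂ) * ξ i) • v) :
    (∀ (l : ℕ) (x : Fin n → ℝ), (∑ i, (x i : ℂ) * ξ i) ∈ U →
      ∀ w : Fin l → (Fin n → ℝ),
        iteratedFDeriv ℝ l u x w =
          (iteratedDeriv l f (∑ i, (x i : ℂ) * ξ i) *
            ∏ j, ∑ i, (w j i : ℂ) * ξ i) • v) ∧
    (∀ Bc : (Fin k → Fin n) → ((Fin d → ℂ) →ₗ[ℂ] W),
      (∑ c : Fin k → Fin n, (∏ i, ξ (c i)) • Bc c v) = 0 →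
      ∀ x : Fin n → ℝ, (∑ i, (x i : ℂ) * ξ i) ∈ U →
        (∑ c : Fin k → Fin n,
          Bc c (iteratedFDeriv ℝ k u x (fun i => Pi.single (c i) (1 : ℝ)))) = 0) := by
  classical
  -- the continuous linear map x ↦ x·ξ
  obtain ⟨L, hLdef⟩ : ∃ L : (Fin n → ℝ) →L[ℝ] ℂ, ∀ x, L x = ∑ i, (x i : ℂ) * ξ i := by
    refine ⟨LinearMap.toContinuousLinearMap
      { toFun := fun x => ∑ i, (x i : ℂ) * ξ i
        map_add' := ?_
        map_smul' := ?_ }, fun x => rfl⟩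
    · intro a b
      push_cast
      simp [add_mul, Finset.sum_add_distrib]
    · intro r a
      push_cast
      simp [Finset.mul_sum, mul_assoc, Complex.real_smul]
  have hfa : AnalyticOnNhd ℂ f U := hf.analyticOnNhd hU
  have hita : ∀ l : ℕ, AnalyticOnNhd ℂ (iteratedDeriv l f) U := by
    intro l
    induction l with
    | zero => simpa [iteratedDeriv_zero] using hfa
    | succ l ih => rw [iteratedDeriv_succ]; exact ih.deriv
  have hder : ∀ (l : ℕ), ∀ z ∈ U, HasDerivAt (iteratedDeriv l f)
      (iteratedDeriv (l + 1) f z) z := by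
    intro l z hz
    rw [iteratedDeriv_succ]
    exact ((hita l z hz).differentiableAt).hasDerivAt
  -- the model multilinear maps
  let M : ∀ l : ℕ, ContinuousMultilinearMap ℝ (fun _ : Fin l => (Fin n → ℝ)) (Fin d → ℂ) :=
    fun l => ((ContinuousLinearMap.toSpanSingleton ℂ v).restrictScalars ℝ).compContinuousMultilinearMap
      ((ContinuousMultilinearMap.mkPiAlgebra ℝ (Fin l) ℂ).compContinuousLinearMap (fun _ => L))
  have hM : ∀ (l : ℕ) (w : Fin l → (Fin n → ℝ)), M l w = (∏ j, L (w j)) • v := by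
    intro l w
    simp [M, ContinuousLinearMap.toSpanSingleton_apply]
  have key : ∀ (l : ℕ) (x : Fin n → ℝ), L x ∈ U →
      iteratedFDeriv ℝ l u x = iteratedDeriv l f (L x) • M l := by
    intro l
    induction l with
    | zero =>
      intro x hx
      ext w
      simp [hu, hM, hLdef, iteratedDeriv_zero]
    | succ l ih =>
      intro x hx
      have hV : IsOpen (L ⁻¹' U) := hU.preimage L.continuous
      have hev : iteratedFDeriv ℝ l u =ᶠ[nhds x] fun y => iteratedDeriv l f (L y) • M l :=
        Filter.eventually_of_mem (hV.mem_nhds hx) (fun y hy => ih y hy)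
      have h1 : HasFDerivAt (fun y => iteratedDeriv l f (L y))
          (iteratedDeriv (l + 1) f (L x) • L) x := by
        have := (((hder l (L x) hx).hasFDerivAt.restrictScalars ℝ).comp x L.hasFDerivAt)
        refine HasFDerivAt.congr_fderiv this ?_
        ext y
        simp [mul_comm]
      have h2 : HasFDerivAt (fun y => iteratedDeriv l f (L y) • M l)
          ((iteratedDeriv (l + 1) f (L x) • L).smulRight (M l)) x := h1.smul_const (M l)
      have h3 : fderiv ℝ (iteratedFDeriv ℝ l u) x =
          (iteratedDeriv (l + 1) f (L x) • L).smulRight (M l) :=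
        hev.fderiv_eq.trans h2.fderiv
      ext w
      rw [iteratedFDeriv_succ_apply_left, h3]
      simp only [ContinuousLinearMap.smulRight_apply, ContinuousLinearMap.smul_apply,
        ContinuousMultilinearMap.smul_apply, hM, smul_smul, Fin.prod_univ_succ, Fin.tail]
      simp only [Pi.smul_apply, smul_eq_mul]
      ring
  have single_sum : ∀ a : Fin n, (∑ i, ((Pi.single a (1 : ℝ) : Fin n → ℝ) i : ℂ) * ξ i) = ξ a := by
    intro a
    rw [Finset.sum_eq_single a]
    · simp
    · intro b _ hb; simp [Pi.single_apply, hb]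
    · simp
  have part1 : ∀ (l : ℕ) (x : Fin n → ℝ), (∑ i, (x i : ℂ) * ξ i) ∈ U →
      ∀ w : Fin l → (Fin n → ℝ),
        iteratedFDeriv ℝ l u x w =
          (iteratedDeriv l f (∑ i, (x i : ℂ) * ξ i) *
            ∏ j, ∑ i, (w j i : ℂ) * ξ i) • v := by
    intro l x hx w
    have hx' : L x ∈ U := by rw [hLdef]; exact hx
    rw [key l x hx']
    simp only [ContinuousMultilinearMap.smul_apply, hM, smul_smul, hLdef]
  refine ⟨part1, ?_⟩
  intro Bc hB x hx
  have hw : ∀ c : Fin k → Fin n,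
      iteratedFDeriv ℝ k u x (fun i => Pi.single (c i) (1 : ℝ)) =
        (iteratedDeriv k f (∑ i, (x i : ℂ) * ξ i) * ∏ j, ξ (c j)) • v := by
    intro c
    rw [part1 k x hx (fun i => Pi.single (c i) (1 : ℝ))]
    congr 2
    exact Finset.prod_congr rfl fun j _ => single_sum (c j)
  calc (∑ c : Fin k → Fin n,
        Bc c (iteratedFDeriv ℝ k u x (fun i => Pi.single (c i) (1 : ℝ))))
      = ∑ c : Fin k → Fin n, iteratedDeriv k f (∑ i, (x i : ℂ) * ξ i) •
          ((∏ j, ξ (c j)) • Bc c v) := by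
        refine Finset.sum_congr rfl fun c _ => ?_
        rw [hw c, map_smul, mul_smul]
    _ = iteratedDeriv k f (∑ i, (x i : ℂ) * ξ i) •
          ∑ c : Fin k → Fin n, (∏ j, ξ (c j)) • Bc c v := by rw [Finset.smul_sum]
    _ = 0 := by rw [hB, smul_zero]
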